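/- The set {√2, √3, √5, √7, ...} of square roots of the prime numbers is linearly independent over ℚ (as elements of ℝ). -/
import Mathlib
set_option maxHeartbeats 1000000

open Real Finset

noncomputable def Ksf (s : Finset ℕ) : Subfield ℝ :=
  Subfield.closure ((fun n : ℕ => Real.sqrt n) '' s)

/-- quadratic extension structure lemma -/
lemma mem_closure_insert_sq {F : Subfield ℝ} {x : ℝ} (hx2 : x ^ 2 ∈ F) {y : ℝ}
    (hy : y ∈ Subfield.closure (insert x (F : Set ℝ))) :
    ∃ a ∈ F, ∃ b ∈ F, y = a + b * x := by
  by_cases hxF : x ∈ F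
  · have : Subfield.closure (insert x (F : Set ℝ)) ≤ F := by
      rw [Subfield.closure_le, Set.insert_subset_iff]
      exact ⟨hxF, le_refl (F : Set ℝ)⟩
    exact ⟨y, this hy, 0, F.zero_mem, by ring⟩
  · set F' : Subfield ℝ :=
      { carrier := {y | ∃ a ∈ F, ∃ b ∈ F, y = a + b * x}
        zero_mem' := ⟨0, F.zero_mem, 0, F.zero_mem, by ring⟩
        one_mem' := ⟨1, F.one_mem, 0, F.zero_mem, by ring⟩
        add_mem' := by
          rintro u v ⟨a, ha, b, hb, rfl⟩ ⟨c, hc, d, hd, rfl⟩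
          exact ⟨a + c, F.add_mem ha hc, b + d, F.add_mem hb hd, by ring⟩
        neg_mem' := by
          rintro u ⟨a, ha, b, hb, rfl⟩
          exact ⟨-a, F.neg_mem ha, -b, F.neg_mem hb, by ring⟩
        mul_mem' := by
          rintro u v ⟨a, ha, b, hb, rfl⟩ ⟨c, hc, d, hd, rfl⟩
          exact ⟨a * c + b * d * x ^ 2, F.add_mem (F.mul_mem ha hc)
            (F.mul_mem (F.mul_mem hb hd) hx2),
            a * d + b * c, F.add_mem (F.mul_mem ha hd) (F.mul_mem hb hc), by ring⟩
        inv_mem' := by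
          rintro u ⟨a, ha, b, hb, rfl⟩
          by_cases hb0 : b = 0
          · exact ⟨a⁻¹, F.inv_mem ha, 0, F.zero_mem, by rw [hb0]; ring⟩
          · have hd : a ^ 2 - b ^ 2 * x ^ 2 ∈ F :=
              F.sub_mem (by exact pow_mem ha 2) (F.mul_mem (pow_mem hb 2) hx2)
            have hdne : a ^ 2 - b ^ 2 * x ^ 2 ≠ 0 := by
              intro h0
              have : a ^ 2 = (b * x) ^ 2 := by ring_nf; ring_nf at h0; linarith
              rcases sq_eq_sq_iff_eq_or_eq_neg.mp this with h | h
              · exact hxF (by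
                  have : x = a / b := by field_simp [hb0] at h ⊢; linarith [h]
                  rw [this]; exact F.div_mem ha hb)
              · exact hxF (by
                  have : x = -a / b := by field_simp [hb0] at h ⊢; linarith [h]
                  rw [this]; exact F.div_mem (F.neg_mem ha) hb)
            have hne : a + b * x ≠ 0 := by
              intro h0
              apply hdne
              have : a = -(b * x) := by linarith
              rw [this]; ring
            refine ⟨a / (a ^ 2 - b ^ 2 * x ^ 2), F.div_mem ha hd,
              -b / (a ^ 2 - b ^ 2 * x ^ 2), F.div_mem (F.neg_mem hb) hd, ?_⟩
            field_simp
            ring }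
    have hle : Subfield.closure (insert x (F : Set ℝ)) ≤ F' := by
      rw [Subfield.closure_le, Set.insert_subset_iff]
      constructor
      · exact ⟨0, F.zero_mem, 1, F.one_mem, by ring⟩
      · intro a ha; exact ⟨a, ha, 0, F.zero_mem, by ring⟩
    exact hle hy

lemma prod_primes_not_square {T : Finset ℕ} (hT : ∀ q ∈ T, q.Prime) (hne : T.Nonempty) :
    ¬ IsSquare (∏ q ∈ T, q) := by
  obtain ⟨q, hq⟩ := hne
  have hqp := hT q hq
  have hpos : ∀ x ∈ T, x ≠ 0 := fun x hx => (hT x hx).ne_zero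
  have hfact : (∏ p ∈ T, p).factorization q = 1 := by
    rw [Nat.factorization_prod hpos]
    rw [Finset.sum_apply']
    rw [Finset.sum_eq_single q]
    · simp [hqp.factorization]
    · intro p hp hpq
      simp [(hT p hp).factorization, Finsupp.single_apply, hpq]
    · intro h; exact absurd hq h
  rintro ⟨k, hk⟩
  have hk0 : k ≠ 0 := by
    intro h; rw [h, mul_zero] at hk
    exact (Finset.prod_ne_zero_iff.mpr hpos) hk
  rw [hk, Nat.factorization_mul hk0 hk0] at hfact
  simp at hfact
  omega

lemma key (S : Finset ℕ) : (∀ p ∈ S, p.Prime) → ∀ T : Finset ℕ, (∀ q ∈ T, q.Prime) →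
    T.Nonempty → Disjoint S T → Real.sqrt ((∏ q ∈ T, q : ℕ) : ℝ) ∉ Ksf S := by
  induction S using Finset.induction_on with
  | empty =>
    intro _ T hT hne _ hmem
    have hbot : Ksf ∅ ≤ (Rat.castHom ℝ).fieldRange := by
      unfold Ksf
      rw [Subfield.closure_le]
      simp
    obtain ⟨q, hq⟩ := RingHom.mem_fieldRange.mp (hbot hmem)
    have hirr : Irrational (Real.sqrt ((∏ q ∈ T, q : ℕ) : ℝ)) :=
      irrational_sqrt_natCast_iff.mpr (prod_primes_not_square hT hne)
    exact hirr ⟨q, hq⟩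
  | @insert p S' hp ih =>
    intro hprimes T hT hne hdisj hmem
    have hpprime : p.Prime := hprimes p (mem_insert_self p S')
    have hS' : ∀ q ∈ S', q.Prime := fun q hq => hprimes q (mem_insert_of_mem hq)
    have hdisjS' : Disjoint S' T := (disjoint_insert_left.mp hdisj).2
    have hpT : p ∉ T := Finset.disjoint_left.mp hdisj (mem_insert_self p S')
    -- rewrite Ksf (insert p S')
    have hmem' : Real.sqrt ((∏ q ∈ T, q : ℕ) : ℝ) ∈
        Subfield.closure (insert (Real.sqrt p) ((Ksf S' : Subfield ℝ) : Set ℝ)) := by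
      have h1 : Ksf (insert p S') ≤
          Subfield.closure (insert (Real.sqrt p) ((Ksf S' : Subfield ℝ) : Set ℝ)) := by
        unfold Ksf
        apply Subfield.closure_mono
        rw [Finset.coe_insert, Set.image_insert_eq]
        apply Set.insert_subset_iff.mpr
        exact ⟨Set.mem_insert _ _, fun y hy =>
          Set.mem_insert_of_mem _ (Subfield.subset_closure hy)⟩
      exact h1 hmem
    have hsq : Real.sqrt p ^ 2 ∈ Ksf S' := by
      rw [Real.sq_sqrt (by positivity : (0:ℝ) ≤ (p:ℝ))]
      exact natCast_mem _ p
    obtain ⟨a, ha, b, hb, heq⟩ := mem_closure_insert_sq hsq hmem'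
    have hTpos : (0:ℝ) ≤ ((∏ q ∈ T, q : ℕ) : ℝ) := by positivity
    by_cases hb0 : b = 0
    · -- sqrt(prod T) ∈ Ksf S'
      apply ih hS' T hT hne hdisjS'
      rw [heq, hb0]; simpa using ha
    by_cases ha0 : a = 0
    · -- sqrt(p * prod T) = b * p ∈ Ksf S'
      apply ih hS' (insert p T) (fun q hq => by
          rcases Finset.mem_insert.mp hq with h | h
          · exact h ▸ hpprime
          · exact hT q h)
        ⟨p, mem_insert_self p T⟩
        (Finset.disjoint_left.mpr (fun q hq hq' => by
          rcases Finset.mem_insert.mp hq' with h | h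
          · exact hp (h ▸ hq)
          · exact Finset.disjoint_left.mp hdisjS' hq h))
      have hprod : (∏ q ∈ insert p T, (q:ℕ)) = p * ∏ q ∈ T, q :=
        Finset.prod_insert hpT
      rw [hprod, Nat.cast_mul, Real.sqrt_mul (by positivity)]
      rw [heq, ha0, zero_add]
      have : Real.sqrt p * (b * Real.sqrt p) = b * p := by
        have hs : Real.sqrt (p:ℝ) ^ 2 = (p:ℝ) := Real.sq_sqrt (by positivity)
        linear_combination b * hs
      rw [this]
      exact Subfield.mul_mem _ hb (natCast_mem _ p)
    · -- sqrt p ∈ Ksf S'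
      apply ih hS' {p} (by simpa using hpprime) ⟨p, mem_singleton_self p⟩
        (Finset.disjoint_left.mpr (fun q hq hq' => hp ((Finset.mem_singleton.mp hq') ▸ hq)))
      rw [Finset.prod_singleton]
      have hsq2 : ((∏ q ∈ T, q : ℕ) : ℝ) = a ^ 2 + b ^ 2 * p + 2 * a * b * Real.sqrt p := by
        have h1 : Real.sqrt ((∏ q ∈ T, q : ℕ) : ℝ) ^ 2 = ((∏ q ∈ T, q : ℕ) : ℝ) :=
          Real.sq_sqrt hTpos
        rw [heq] at h1
        have h2 : Real.sqrt (p:ℕ) ^ 2 = (p:ℝ) := Real.sq_sqrt (by positivity)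
        nlinarith [h1, h2]
      have : Real.sqrt p = (((∏ q ∈ T, q : ℕ) : ℝ) - a ^ 2 - b ^ 2 * p) / (2 * a * b) := by
        rw [hsq2]; field_simp; ring
      rw [this]
      apply Subfield.div_mem
      · exact Subfield.sub_mem _ (Subfield.sub_mem _ (natCast_mem _ _)
          (pow_mem ha 2)) (Subfield.mul_mem _ (pow_mem hb 2) (natCast_mem _ p))
      · exact Subfield.mul_mem _ (Subfield.mul_mem _
          (SubfieldClass.ratCast_mem _ 2) ha) hb

/-- The square roots of the prime numbers are linearly independent over `ℚ`
as elements of the `ℚ`-vector space `ℝ`. -/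
theorem stmt5 :
    LinearIndependent ℚ (fun p : Nat.Primes => Real.sqrt (p : ℕ)) := by
  rw [linearIndependent_iff']
  intro s g hsum i hi
  by_contra hgi
  set S : Finset ℕ := (s.erase i).image (fun p : Nat.Primes => (p : ℕ)) with hS
  have hSprime : ∀ p ∈ S, p.Prime := by
    intro p hp
    obtain ⟨q, _, rfl⟩ := Finset.mem_image.mp hp
    exact q.2
  apply key S hSprime {(i : ℕ)} (by simpa using i.2) ⟨(i : ℕ), mem_singleton_self _⟩
    (Finset.disjoint_left.mpr (fun q hq hq' => by
      obtain ⟨j, hj, hji⟩ := Finset.mem_image.mp hq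
      rw [Finset.mem_singleton.mp hq'] at hji
      have : j = i := Nat.Primes.coe_nat_injective hji
      exact (Finset.mem_erase.mp hj).1 this))
  rw [Finset.prod_singleton]
  have hsplit : (g i : ℝ) * Real.sqrt (i : ℕ) =
      - ∑ j ∈ s.erase i, (g j : ℝ) * Real.sqrt (j : ℕ) := by
    have := Finset.add_sum_erase s (fun j : Nat.Primes => g j • Real.sqrt (j : ℕ)) hi
    rw [hsum] at this
    simp only [Rat.smul_def] at this
    linarith [this]
  have : Real.sqrt (i : ℕ) =
      (g i : ℝ)⁻¹ * (- ∑ j ∈ s.erase i, (g j : ℝ) * Real.sqrt (j : ℕ)) := by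
    rw [← hsplit]
    field_simp
  rw [this]
  apply Subfield.mul_mem
  · exact Subfield.inv_mem _ (SubfieldClass.ratCast_mem _ _)
  apply Subfield.neg_mem
  apply Subfield.sum_mem
  intro j hj
  apply Subfield.mul_mem
  · exact SubfieldClass.ratCast_mem _ _
  · apply Subfield.subset_closure
    exact Set.mem_image_of_mem _ (by exact_mod_cast Finset.mem_image_of_mem _ hj)
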